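/- Let f₁ and f₂ be measurable functions on [0,T] possessing local times L_h(f₁), L_h(f₂). Then for every ε > 0, sup over h ∈ ℝ of |L_h(f₁) − L_h(f₂)| is at most (T/ε²)·sup over t ∈ [0,T] of |f₁(t) − f₂(t)| plus the sum over i ∈ {1,2} of sup over h₁, h₂ with |h₁ − h₂| ≤ ε of |L_{h₁}(f_i) − L_{h₂}(f_i)|. -/

import Mathlib

open MeasureTheory
open scoped ENNReal

/-- `L` is the occupation density (local time profile) of `f` on the time interval
`[0, T]`: for every Borel set `A`, `∫_A L(a) da = Leb {t ∈ [0,T] : f t ∈ A}`. -/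
def IsOccupationDensity (T : ℝ) (f : ℝ → ℝ) (L : ℝ → ℝ) : Prop :=
  ∀ A : Set ℝ, MeasurableSet A →
    ∫ a in A, L a = (volume {t ∈ Set.Icc (0 : ℝ) T | f t ∈ A}).toReal

lemma occ_integrable (T : ℝ) (hT : 0 < T) (f L : ℝ → ℝ)
    (hL : IsOccupationDensity T f L) : Integrable L := by
  by_contra hni
  have h0 := hL Set.univ MeasurableSet.univ
  rw [Measure.restrict_univ, integral_undef hni] at h0
  have hset : {t ∈ Set.Icc (0:ℝ) T | f t ∈ Set.univ} = Set.Icc 0 T := by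
    ext t; simp
  rw [hset, Real.volume_Icc, sub_zero, ENNReal.toReal_ofReal hT.le] at h0
  linarith

lemma tonelli_occ (T ε h : ℝ) (f : ℝ → ℝ) (hf : Measurable f) :
    ∫⁻ u in Set.Icc (0:ℝ) ε,
        volume {t ∈ Set.Icc (0:ℝ) T | f t ∈ Set.Icc (h-u) (h-u+ε)}
      = ∫⁻ t in Set.Icc (0:ℝ) T, ENNReal.ofReal (ε - |h - f t|) := by
  have step1 : ∀ u : ℝ, volume {t ∈ Set.Icc (0:ℝ) T | f t ∈ Set.Icc (h-u) (h-u+ε)}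
      = ∫⁻ t in Set.Icc (0:ℝ) T,
          (Set.Icc (h-u) (h-u+ε)).indicator (1 : ℝ → ℝ≥0∞) (f t) := by
    intro u
    have hind : ∀ t : ℝ, (Set.Icc (h-u) (h-u+ε)).indicator (1 : ℝ → ℝ≥0∞) (f t)
        = (f ⁻¹' Set.Icc (h-u) (h-u+ε)).indicator (1 : ℝ → ℝ≥0∞) t := by
      intro t
      by_cases ht : f t ∈ Set.Icc (h-u) (h-u+ε) <;>
        simp [Set.indicator_apply, ht]
    simp only [hind]
    rw [lintegral_indicator_one (hf measurableSet_Icc),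
      Measure.restrict_apply (hf measurableSet_Icc)]
    congr 1
    ext t
    simp only [Set.mem_setOf_eq, Set.mem_inter_iff, Set.mem_preimage]
    tauto
  simp only [step1]
  rw [lintegral_lintegral_swap]
  · apply lintegral_congr
    intro t
    have hind : ∀ u : ℝ, (Set.Icc (h-u) (h-u+ε)).indicator (1 : ℝ → ℝ≥0∞) (f t)
        = (Set.Icc (h - f t) (h - f t + ε)).indicator (1 : ℝ → ℝ≥0∞) u := by
      intro u
      have : f t ∈ Set.Icc (h-u) (h-u+ε) ↔ u ∈ Set.Icc (h - f t) (h - f t + ε) := by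
        simp only [Set.mem_Icc]; constructor <;> intro ⟨a, b⟩ <;> constructor <;> linarith
      by_cases hu : u ∈ Set.Icc (h - f t) (h - f t + ε) <;>
        simp [Set.indicator_apply, hu, this]
    simp only [hind]
    rw [lintegral_indicator_one measurableSet_Icc,
      Measure.restrict_apply measurableSet_Icc, Set.Icc_inter_Icc, Real.volume_Icc]
    congr 1
    rcases le_total 0 (h - f t) with hc | hc
    · rw [abs_of_nonneg hc]
      rw [max_eq_left hc, min_eq_right (by linarith)]
    · rw [abs_of_nonpos hc]
      rw [max_eq_right hc, min_eq_left (by linarith)]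
      ring
  · apply Measurable.aemeasurable
    have : (Function.uncurry fun u t =>
        (Set.Icc (h-u) (h-u+ε)).indicator (1 : ℝ → ℝ≥0∞) (f t))
        = Set.indicator {p : ℝ × ℝ | h - p.1 ≤ f p.2 ∧ f p.2 ≤ h - p.1 + ε}
            (1 : ℝ × ℝ → ℝ≥0∞) := by
      funext p
      simp only [Function.uncurry, Set.indicator_apply, Set.mem_Icc, Set.mem_setOf_eq,
        Pi.one_apply]
    rw [this]
    exact Measurable.indicator measurable_const
      ((measurableSet_le (measurable_const.sub measurable_fst) (hf.comp measurable_snd)).inter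
        (measurableSet_le (hf.comp measurable_snd)
          ((measurable_const.sub measurable_fst).add_const ε)))

lemma key_one_side (T : ℝ) (hT : 0 < T) (f₁ f₂ L₁ L₂ : ℝ → ℝ)
    (hf₁ : Measurable f₁) (hf₂ : Measurable f₂)
    (hL₁ : IsOccupationDensity T f₁ L₁) (hL₂ : IsOccupationDensity T f₂ L₂)
    (ε : ℝ) (hε : 0 < ε) (D M₁ M₂ : ℝ)
    (hD : ∀ t ∈ Set.Icc (0 : ℝ) T, |f₁ t - f₂ t| ≤ D)
    (hM₁ : ∀ h₁ h₂ : ℝ, |h₁ - h₂| ≤ ε → |L₁ h₁ - L₁ h₂| ≤ M₁)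
    (hM₂ : ∀ h₁ h₂ : ℝ, |h₁ - h₂| ≤ ε → |L₂ h₁ - L₂ h₂| ≤ M₂)
    (h : ℝ) : L₁ h - L₂ h ≤ T / ε ^ 2 * D + (M₁ + M₂) := by
  have hD0 : 0 ≤ D := le_trans (abs_nonneg _) (hD 0 ⟨le_refl 0, hT.le⟩)
  have hM₁0 : 0 ≤ M₁ := le_trans (abs_nonneg _) (hM₁ h h (by simp [hε.le]))
  have hM₂0 : 0 ≤ M₂ := le_trans (abs_nonneg _) (hM₂ h h (by simp [hε.le]))
  have hTD0 : 0 ≤ T / ε ^ 2 * D := by positivity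
  set c : ℝ := L₁ h - L₂ h - (M₁ + M₂) with hc_def
  rcases le_or_gt c 0 with hc | hc
  · linarith
  -- main case
  set N₁ : ℝ → ℝ≥0∞ := fun u =>
    volume {t ∈ Set.Icc (0:ℝ) T | f₁ t ∈ Set.Icc (h-u) (h-u+ε)} with hN₁
  set N₂ : ℝ → ℝ≥0∞ := fun u =>
    volume {t ∈ Set.Icc (0:ℝ) T | f₂ t ∈ Set.Icc (h-u) (h-u+ε)} with hN₂
  have hNfin : ∀ (g : ℝ → ℝ) (u : ℝ),
      volume {t ∈ Set.Icc (0:ℝ) T | g t ∈ Set.Icc (h-u) (h-u+ε)} ≠ ∞ := by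
    intro g u
    refine ne_of_lt (lt_of_le_of_lt (measure_mono (Set.sep_subset _ _)) ?_)
    rw [Real.volume_Icc]; exact ENNReal.ofReal_lt_top
  -- pointwise (in u) inequality between the real occupation measures
  have hptwise : ∀ u ∈ Set.Icc (0:ℝ) ε, N₂ u + ENNReal.ofReal (ε * c) ≤ N₁ u := by
    intro u hu
    have hIcc : MeasurableSet (Set.Icc (h-u) (h-u+ε)) := measurableSet_Icc
    have hvol : (volume (Set.Icc (h-u) (h-u+ε))).toReal = ε := by
      rw [Real.volume_Icc, ENNReal.toReal_ofReal (by linarith : (0:ℝ) ≤ h-u+ε-(h-u))]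
      ring
    have hclose : ∀ a ∈ Set.Icc (h-u) (h-u+ε), |h - a| ≤ ε := by
      intro a ha
      rw [abs_le]
      rcases ha with ⟨ha1, ha2⟩; rcases hu with ⟨hu1, hu2⟩
      constructor <;> linarith
    have key1 : ε * (L₁ h - M₁) ≤ (N₁ u).toReal := by
      rw [hN₁]; rw [← hL₁ _ hIcc]
      have hmono : ∫ a in Set.Icc (h-u) (h-u+ε), (L₁ h - M₁)
          ≤ ∫ a in Set.Icc (h-u) (h-u+ε), L₁ a := by
        apply setIntegral_mono_on (integrableOn_const (lt_top_iff_ne_top.1 ?_) (by simp))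
          ((occ_integrable T hT f₁ L₁ hL₁).integrableOn) hIcc ?_
        · rw [Real.volume_Icc]; exact ENNReal.ofReal_lt_top
        · intro a ha
          have := hM₁ h a (hclose a ha)
          have := abs_le.1 this
          linarith [this.1, this.2]
      rw [setIntegral_const] at hmono
      rw [measureReal_def, hvol, smul_eq_mul] at hmono
      exact hmono
    have key2 : (N₂ u).toReal ≤ ε * (L₂ h + M₂) := by
      rw [hN₂]; rw [← hL₂ _ hIcc]
      have hmono : ∫ a in Set.Icc (h-u) (h-u+ε), L₂ a
          ≤ ∫ a in Set.Icc (h-u) (h-u+ε), (L₂ h + M₂) := by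
        apply setIntegral_mono_on ((occ_integrable T hT f₂ L₂ hL₂).integrableOn)
          (integrableOn_const (lt_top_iff_ne_top.1 ?_) (by simp)) hIcc ?_
        · rw [Real.volume_Icc]; exact ENNReal.ofReal_lt_top
        · intro a ha
          have := hM₂ h a (hclose a ha)
          have := abs_le.1 this
          linarith [this.1, this.2]
      rw [setIntegral_const] at hmono
      rw [measureReal_def, hvol, smul_eq_mul] at hmono
      exact hmono
    have hreal : (N₂ u).toReal + ε * c ≤ (N₁ u).toReal := by
      have : ε * c = ε * (L₁ h - M₁) - ε * (L₂ h + M₂) := by rw [hc_def]; ring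
      linarith
    calc N₂ u + ENNReal.ofReal (ε * c)
        = ENNReal.ofReal ((N₂ u).toReal + ε * c) := by
          rw [ENNReal.ofReal_add ENNReal.toReal_nonneg (by positivity),
            ENNReal.ofReal_toReal (hNfin f₂ u)]
      _ ≤ ENNReal.ofReal ((N₁ u).toReal) := ENNReal.ofReal_le_ofReal hreal
      _ = N₁ u := ENNReal.ofReal_toReal (hNfin f₁ u)
  -- integrate over u ∈ [0, ε]
  have hint : ∫⁻ u in Set.Icc (0:ℝ) ε, (N₂ u + ENNReal.ofReal (ε * c))
      ≤ ∫⁻ u in Set.Icc (0:ℝ) ε, N₁ u :=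
    lintegral_mono_ae ((ae_restrict_iff' measurableSet_Icc).2 (ae_of_all _ hptwise))
  rw [lintegral_add_right _ measurable_const, setLIntegral_const, Real.volume_Icc,
    sub_zero] at hint
  rw [tonelli_occ T ε h f₁ hf₁, tonelli_occ T ε h f₂ hf₂] at hint
  -- Lipschitz comparison of the tent functions
  have hlip : ∫⁻ t in Set.Icc (0:ℝ) T, ENNReal.ofReal (ε - |h - f₁ t|)
      ≤ (∫⁻ t in Set.Icc (0:ℝ) T, ENNReal.ofReal (ε - |h - f₂ t|))
        + ENNReal.ofReal D * ENNReal.ofReal T := by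
    have hpt : ∀ t ∈ Set.Icc (0:ℝ) T, ENNReal.ofReal (ε - |h - f₁ t|)
        ≤ ENNReal.ofReal (ε - |h - f₂ t|) + ENNReal.ofReal D := by
      intro t ht
      have h1 : |h - f₂ t| - |h - f₁ t| ≤ |f₁ t - f₂ t| := by
        have := abs_sub_abs_le_abs_sub (h - f₂ t) (h - f₁ t)
        have heq : (h - f₂ t) - (h - f₁ t) = f₁ t - f₂ t := by ring
        rwa [heq] at this
      have h2 : ε - |h - f₁ t| ≤ (ε - |h - f₂ t|) + D := by
        have := hD t ht; linarith
      calc ENNReal.ofReal (ε - |h - f₁ t|)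
          ≤ ENNReal.ofReal ((ε - |h - f₂ t|) + D) := ENNReal.ofReal_le_ofReal h2
        _ ≤ ENNReal.ofReal (ε - |h - f₂ t|) + ENNReal.ofReal D := ENNReal.ofReal_add_le
    calc ∫⁻ t in Set.Icc (0:ℝ) T, ENNReal.ofReal (ε - |h - f₁ t|)
        ≤ ∫⁻ t in Set.Icc (0:ℝ) T,
            (ENNReal.ofReal (ε - |h - f₂ t|) + ENNReal.ofReal D) :=
          lintegral_mono_ae ((ae_restrict_iff' measurableSet_Icc).2 (ae_of_all _ hpt))
      _ = (∫⁻ t in Set.Icc (0:ℝ) T, ENNReal.ofReal (ε - |h - f₂ t|))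
            + ENNReal.ofReal D * ENNReal.ofReal T := by
          rw [lintegral_add_right _ measurable_const, setLIntegral_const, Real.volume_Icc,
            sub_zero]
  have hfin2 : (∫⁻ t in Set.Icc (0:ℝ) T, ENNReal.ofReal (ε - |h - f₂ t|)) ≠ ∞ := by
    refine ne_of_lt (lt_of_le_of_lt
      (lintegral_mono (g := fun _ => ENNReal.ofReal ε) (fun t =>
        ENNReal.ofReal_le_ofReal (by linarith [abs_nonneg (h - f₂ t)]))) ?_)
    · rw [setLIntegral_const, Real.volume_Icc, sub_zero]
      exact ENNReal.mul_lt_top ENNReal.ofReal_lt_top ENNReal.ofReal_lt_top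
  have hmain : ENNReal.ofReal (ε * c) * ENNReal.ofReal ε
      ≤ ENNReal.ofReal D * ENNReal.ofReal T := by
    exact (ENNReal.add_le_add_iff_left hfin2).1 (le_trans hint hlip)
  rw [← ENNReal.ofReal_mul (by positivity), ← ENNReal.ofReal_mul hD0] at hmain
  have hfinal : ε * c * ε ≤ D * T :=
    (ENNReal.ofReal_le_ofReal_iff (by positivity)).1 hmain
  have hε2 : (0:ℝ) < ε ^ 2 := by positivity
  have : c ≤ T / ε ^ 2 * D := by
    rw [div_mul_eq_mul_div, le_div_iff₀ hε2]
    nlinarith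
  linarith

/-- Comparison of local times of two functions: if `f₁, f₂` are measurable on `[0,T]`
with local times `L₁, L₂`, then for every `ε > 0` and every level `h`,
`|L₁(h) - L₂(h)| ≤ (T/ε²) · sup_{[0,T]} |f₁ - f₂| + Σᵢ sup_{|h₁-h₂|≤ε} |Lᵢ(h₁) - Lᵢ(h₂)|`
(with the suprema replaced by arbitrary upper bounds `D`, `M₁`, `M₂`). -/
theorem local_time_sup_comparison (T : ℝ) (hT : 0 < T) (f₁ f₂ L₁ L₂ : ℝ → ℝ)
    (hf₁ : Measurable f₁) (hf₂ : Measurable f₂)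
    (hL₁ : IsOccupationDensity T f₁ L₁) (hL₂ : IsOccupationDensity T f₂ L₂)
    (ε : ℝ) (hε : 0 < ε) (D M₁ M₂ : ℝ)
    (hD : ∀ t ∈ Set.Icc (0 : ℝ) T, |f₁ t - f₂ t| ≤ D)
    (hM₁ : ∀ h₁ h₂ : ℝ, |h₁ - h₂| ≤ ε → |L₁ h₁ - L₁ h₂| ≤ M₁)
    (hM₂ : ∀ h₁ h₂ : ℝ, |h₁ - h₂| ≤ ε → |L₂ h₁ - L₂ h₂| ≤ M₂) :
    ∀ h : ℝ, |L₁ h - L₂ h| ≤ T / ε ^ 2 * D + (M₁ + M₂) := by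
  intro h
  have hD' : ∀ t ∈ Set.Icc (0 : ℝ) T, |f₂ t - f₁ t| ≤ D := by
    intro t ht; rw [abs_sub_comm]; exact hD t ht
  have h1 := key_one_side T hT f₁ f₂ L₁ L₂ hf₁ hf₂ hL₁ hL₂ ε hε D M₁ M₂ hD hM₁ hM₂ h
  have h2 := key_one_side T hT f₂ f₁ L₂ L₁ hf₂ hf₁ hL₂ hL₁ ε hε D M₂ M₁ hD' hM₂ hM₁ h
  rw [abs_sub_le_iff]
  exact ⟨h1, by linarith⟩
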